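/- Let g be a continuous distortion function and set α_{n−1} = g((n−1)/n). Then for every α with α_{n−1} < α < 1 and every x ∈ ℝⁿ, the scaled generalized-ES norm equals the maximum absolute entry: ⟨⟨x⟩⟩_α^{S,g} = |x|_(n) = max_{1≤i≤n} |x_i|. -/

import Mathlib

open Finset

/-- The absolute values of the components of `x`, arranged in increasing order:
`absSorted x i` is `|x|_(i+1)` in the paper's notation. -/
noncomputable def absSorted {n : ℕ} (x : Fin n → ℝ) : Fin n → ℝ :=
  fun i => |x (Tuple.sort (fun j => |x j|) i)|

/-- `coeff n g i = g((i+1)/n) - g(i/n)`, the paper's `c_{i+1}`. -/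
noncomputable def coeff (n : ℕ) (g : ℝ → ℝ) (i : Fin n) : ℝ :=
  g (((i : ℕ) + 1 : ℝ) / n) - g (((i : ℕ) : ℝ) / n)

/-- The objective function whose infimum over `t` defines the scaled generalized-ES norm. -/
noncomputable def sgesObj {n : ℕ} (g : ℝ → ℝ) (α : ℝ) (x : Fin n → ℝ) (t : ℝ) : ℝ :=
  t + (1 - α)⁻¹ * ∑ i, coeff n g i * max (absSorted x i - t) 0

/-- The scaled generalized-ES norm `⟨⟨x⟩⟩_α^{S,g}`. -/
noncomputable def sges {n : ℕ} (g : ℝ → ℝ) (α : ℝ) (x : Fin n → ℝ) : ℝ :=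
  ⨅ t : ℝ, sgesObj g α x t

/-- The non-scaled generalized-ES norm `⟨⟨x⟩⟩_α^{g} = n(1-α)⟨⟨x⟩⟩_α^{S,g}`. -/
noncomputable def nges {n : ℕ} (g : ℝ → ℝ) (α : ℝ) (x : Fin n → ℝ) : ℝ :=
  (n : ℝ) * (1 - α) * sges g α x

/-- The dual norm of a (norm) functional `N` on `ℝⁿ`. -/
noncomputable def dualNorm {n : ℕ} (N : (Fin n → ℝ) → ℝ) (y : Fin n → ℝ) : ℝ :=
  sSup {r : ℝ | ∃ x : Fin n → ℝ, N x ≤ 1 ∧ r = ∑ i, x i * y i}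

/-- The ordered weighted L1 (OWL) norm. -/
noncomputable def owl {n : ℕ} (w : Fin n → ℝ) (x : Fin n → ℝ) : ℝ :=
  ∑ i, w i * absSorted x i

/-- for `g((n-1)/n) < α < 1`, the scaled generalized-ES norm equals the
largest sorted absolute entry `|x|₍ₙ₎`, i.e. the maximum absolute entry. -/
theorem stmt8 (n : ℕ) (hn : 1 ≤ n) (g : ℝ → ℝ)
    (hg_mono : MonotoneOn g (Set.Icc 0 1)) (hg0 : g 0 = 0) (hg1 : g 1 = 1)
    (hg_cont : ContinuousOn g (Set.Icc 0 1))
    (α : ℝ) (hα1 : g (((n : ℝ) - 1) / n) < α) (hα2 : α < 1) (x : Fin n → ℝ) :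
    sges g α x = absSorted x ⟨n - 1, by omega⟩ ∧
      sges g α x = ⨆ i, |x i| := by
  have hne : Nonempty (Fin n) := ⟨⟨0, by omega⟩⟩
  have hn0 : (0 : ℝ) < n := by exact_mod_cast Nat.pos_of_ne_zero (by omega)
  set lastI : Fin n := ⟨n - 1, by omega⟩ with hlastI
  set M := absSorted x lastI with hM
  have hmono : Monotone (absSorted x) := Tuple.monotone_sort (fun j => |x j|)
  have hle : ∀ i, absSorted x i ≤ M := by
    intro i
    apply hmono
    rw [Fin.le_def]
    have := i.isLt
    simp only [hlastI]
    omega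
  have hc : ∀ i : Fin n, 0 ≤ coeff n g i := by
    intro i
    have h1 : ((i : ℕ) : ℝ) / n ∈ Set.Icc (0 : ℝ) 1 := by
      constructor
      · positivity
      · rw [div_le_one hn0]; exact_mod_cast i.isLt.le
    have h2 : (((i : ℕ) : ℝ) + 1) / n ∈ Set.Icc (0 : ℝ) 1 := by
      constructor
      · positivity
      · rw [div_le_one hn0]
        have : ((i : ℕ) : ℝ) + 1 = (((i : ℕ) + 1 : ℕ) : ℝ) := by push_cast; ring
        rw [this]
        exact_mod_cast i.isLt
    have := hg_mono h1 h2 (by gcongr; linarith)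
    simpa [coeff] using this
  have hcast : (((lastI : ℕ) : ℝ)) = (n : ℝ) - 1 := by
    simp only [hlastI]
    rw [Nat.cast_sub hn]; norm_num
  have hclast : coeff n g lastI = 1 - g (((n : ℝ) - 1) / n) := by
    unfold coeff
    rw [hcast, show ((n : ℝ) - 1 + 1) / n = 1 by field_simp; ring, hg1]
  have hαpos : (0 : ℝ) < 1 - α := by linarith
  have hcl : 1 - α ≤ coeff n g lastI := by rw [hclast]; linarith
  have hfM : sgesObj g α x M = M := by
    unfold sgesObj
    have hsum : ∑ i, coeff n g i * max (absSorted x i - M) 0 = 0 := by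
      apply Finset.sum_eq_zero
      intro i _
      rw [max_eq_right (by linarith [hle i])]
      ring
    rw [hsum]; ring
  have hflb : ∀ t, M ≤ sgesObj g α x t := by
    intro t
    unfold sgesObj
    rcases le_or_gt M t with ht | ht
    · have hsum : ∑ i, coeff n g i * max (absSorted x i - t) 0 = 0 := by
        apply Finset.sum_eq_zero
        intro i _
        rw [max_eq_right (by linarith [hle i])]
        ring
      rw [hsum]; simp; linarith
    · have hterm : coeff n g lastI * (M - t) ≤
          ∑ i, coeff n g i * max (absSorted x i - t) 0 := by
        have hsingle := Finset.single_le_sum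
          (f := fun i => coeff n g i * max (absSorted x i - t) 0)
          (fun i _ => mul_nonneg (hc i) (le_max_right _ _)) (Finset.mem_univ lastI)
        calc coeff n g lastI * (M - t)
            = coeff n g lastI * max (absSorted x lastI - t) 0 := by
              rw [max_eq_left (by rw [← hM]; linarith)]
          _ ≤ _ := hsingle
      have h2 : M - t ≤ (1 - α)⁻¹ * ∑ i, coeff n g i * max (absSorted x i - t) 0 := by
        calc M - t = (1 - α)⁻¹ * ((1 - α) * (M - t)) := by field_simp
          _ ≤ (1 - α)⁻¹ * (coeff n g lastI * (M - t)) := by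
              apply mul_le_mul_of_nonneg_left _ (by positivity)
              exact mul_le_mul_of_nonneg_right hcl (by linarith)
          _ ≤ _ := mul_le_mul_of_nonneg_left hterm (by positivity)
      linarith
  have hinf : sges g α x = M := by
    unfold sges
    apply le_antisymm
    · calc ⨅ t, sgesObj g α x t ≤ sgesObj g α x M :=
            ciInf_le ⟨M, by rintro y ⟨t, rfl⟩; exact hflb t⟩ M
        _ = M := hfM
    · exact le_ciInf hflb
  have hsup : (⨆ i, |x i|) = M := by
    apply le_antisymm
    · apply ciSup_le
      intro i
      have h : |x i| = absSorted x ((Tuple.sort (fun j => |x j|)).symm i) := by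
        simp [absSorted]
      rw [h]; exact hle _
    · have h : M = |x (Tuple.sort (fun j => |x j|) lastI)| := rfl
      rw [h]
      exact le_ciSup (Set.Finite.bddAbove (Set.finite_range (fun i => |x i|))) (Tuple.sort (fun j => |x j|) lastI)
  exact ⟨hinf, by rw [hinf, hsup]⟩
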